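/- Fix θ ∈ ℝ with θ ≠ 0, and let U, V be the operators on the Schwartz space 𝓢(ℝ; ℂ) given by (Uξ)(s) = ξ(s + θ) and (Vξ)(s) = exp(2πis) · ξ(s). The maps ∇₁ and ∇₂ defined by (∇₁ξ)(s) = −(2πis/θ) · ξ(s) and (∇₂ξ)(s) = ξ′(s) send Schwartz functions to Schwartz functions, and as operators on 𝓢(ℝ; ℂ) they satisfy the connection compatibility relations: ∇₁ ∘ U − U ∘ ∇₁ = 2πi · U, ∇₁ ∘ V − V ∘ ∇₁ = 0, ∇₂ ∘ U − U ∘ ∇₂ = 0, and ∇₂ ∘ V − V ∘ ∇₂ = 2πi · V. -/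

import Mathlib

open Complex SchwartzMap

lemma hasDerivAt_cexp_I_mul (c : ℂ) (x : ℝ) :
    HasDerivAt (fun s : ℝ => Complex.exp (c * s)) (c * Complex.exp (c * x)) x := by
  have h1 : HasDerivAt (fun s : ℝ => c * (s : ℂ)) c x := by
    simpa using (Complex.ofRealCLM.hasDerivAt (x := x)).const_mul c
  simpa [mul_comm] using h1.cexp

lemma iteratedDeriv_cexp (c : ℂ) (n : ℕ) :
    iteratedDeriv n (fun s : ℝ => Complex.exp (c * s)) =
      fun s : ℝ => c ^ n * Complex.exp (c * s) := by
  induction n with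
  | zero => simp
  | succ n ih =>
    rw [iteratedDeriv_succ, ih]
    funext x
    have : HasDerivAt (fun s : ℝ => c ^ n * Complex.exp (c * s))
        (c ^ n * (c * Complex.exp (c * x))) x :=
      (hasDerivAt_cexp_I_mul c x).const_mul _
    rw [this.deriv]; ring

lemma contDiff_cexp_mul (c : ℂ) : ContDiff ℝ (⊤ : ℕ∞) (fun s : ℝ => Complex.exp (c * s)) := by
  have h1 : ContDiff ℝ (⊤ : ℕ∞) (fun s : ℝ => (c * s : ℂ)) :=
    contDiff_const.mul Complex.ofRealCLM.contDiff
  have h2 : ContDiff ℝ (⊤ : ℕ∞) (Complex.exp) := Complex.contDiff_exp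
  exact h2.comp h1

lemma temperate_cexp (t : ℝ) :
    Function.HasTemperateGrowth (fun s : ℝ => Complex.exp ((t * Complex.I) * s)) := by
  refine ⟨contDiff_cexp_mul (t * Complex.I), fun n => ⟨0, ‖(t * Complex.I)‖ ^ n, fun x => ?_⟩⟩
  rw [norm_iteratedFDeriv_eq_norm_iteratedDeriv, iteratedDeriv_cexp]
  have : ‖Complex.exp (t * Complex.I * x)‖ = 1 := by
    rw [Complex.norm_exp]
    simp [mul_assoc, mul_comm Complex.I (x:ℂ)]
  simp [this, norm_pow]

lemma temperate_shift (θ : ℝ) : Function.HasTemperateGrowth (fun s : ℝ => s + θ) := by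
  have h : Function.HasTemperateGrowth (fderiv ℝ (fun s : ℝ => s + θ)) := by
    have : (fderiv ℝ (fun s : ℝ => s + θ)) = fun _ => ContinuousLinearMap.id ℝ ℝ := by
      funext x
      rw [show (fun s : ℝ => s + θ) = fun s : ℝ => id s + θ from rfl,
        fderiv_add_const, fderiv_id]
    rw [this]
    exact Function.HasTemperateGrowth.const _
  refine h.of_fderiv ((differentiable_id).add_const θ) (k := 1) (C := 1 + |θ|) fun x => ?_
  have : ‖x + θ‖ ≤ ‖x‖ + |θ| := norm_add_le x θ
  have h0 : (0:ℝ) ≤ ‖x‖ := norm_nonneg x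
  have h1 : (0:ℝ) ≤ |θ| := abs_nonneg θ
  calc ‖x + θ‖ ≤ ‖x‖ + |θ| := this
    _ ≤ (1 + |θ|) * (1 + ‖x‖) ^ 1 := by nlinarith

/-- The connection operators `∇₁` (multiplication by `-2πis/θ`) and `∇₂` (differentiation)
preserve the Schwartz space and satisfy the compatibility relations
`[∇₁, U] = 2πi U`, `[∇₁, V] = 0`, `[∇₂, U] = 0`, `[∇₂, V] = 2πi V`. -/
theorem stmt_5 (θ : ℝ) (hθ : θ ≠ 0) :
    ∃ U V D₁ D₂ : SchwartzMap ℝ ℂ → SchwartzMap ℝ ℂ,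
      (∀ ξ : SchwartzMap ℝ ℂ, ∀ s : ℝ, U ξ s = ξ (s + θ)) ∧
      (∀ ξ : SchwartzMap ℝ ℂ, ∀ s : ℝ,
        V ξ s = Complex.exp (2 * Real.pi * Complex.I * s) * ξ s) ∧
      (∀ ξ : SchwartzMap ℝ ℂ, ∀ s : ℝ,
        D₁ ξ s = -(2 * Real.pi * Complex.I * s / θ) * ξ s) ∧
      (∀ ξ : SchwartzMap ℝ ℂ, ∀ s : ℝ, D₂ ξ s = deriv (⇑ξ) s) ∧
      (∀ ξ : SchwartzMap ℝ ℂ,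
        D₁ (U ξ) - U (D₁ ξ) = (2 * Real.pi * Complex.I : ℂ) • U ξ) ∧
      (∀ ξ : SchwartzMap ℝ ℂ, D₁ (V ξ) - V (D₁ ξ) = 0) ∧
      (∀ ξ : SchwartzMap ℝ ℂ, D₂ (U ξ) - U (D₂ ξ) = 0) ∧
      (∀ ξ : SchwartzMap ℝ ℂ,
        D₂ (V ξ) - V (D₂ ξ) = (2 * Real.pi * Complex.I : ℂ) • V ξ) := by
  have hexp : Function.HasTemperateGrowth
      (fun s : ℝ => Complex.exp (2 * Real.pi * Complex.I * s)) := by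
    have := temperate_cexp (2 * Real.pi)
    convert this using 2 with s
    push_cast; ring_nf
  have hg1 : Function.HasTemperateGrowth (fun s : ℝ => -(2 * Real.pi * Complex.I * s / θ)) := by
    have : (fun s : ℝ => -(2 * Real.pi * Complex.I * s / θ)) =
        ((-(2 * Real.pi * Complex.I / θ) : ℂ) • Complex.ofRealCLM : ℝ →L[ℝ] ℂ) := by
      ext s; simp [ContinuousLinearMap.smul_apply]; ring
    rw [this]
    exact ContinuousLinearMap.hasTemperateGrowth _
  have hupper : ∃ (k : ℕ) (C : ℝ), ∀ x : ℝ, ‖x‖ ≤ C * (1 + ‖x + θ‖) ^ k := by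
    refine ⟨1, 1 + |θ|, fun x => ?_⟩
    have : ‖x‖ ≤ ‖x + θ‖ + |θ| := by
      calc ‖x‖ = ‖(x + θ) + (-θ)‖ := by ring_nf
        _ ≤ ‖x + θ‖ + ‖(-θ)‖ := norm_add_le _ _
        _ = ‖x + θ‖ + |θ| := by simp
    have h0 : (0:ℝ) ≤ ‖x + θ‖ := norm_nonneg _
    have h1 : (0:ℝ) ≤ |θ| := abs_nonneg θ
    calc ‖x‖ ≤ ‖x + θ‖ + |θ| := this
      _ ≤ (1 + |θ|) * (1 + ‖x + θ‖) ^ 1 := by nlinarith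
  set B : ℂ →L[ℝ] ℂ →L[ℝ] ℂ := (ContinuousLinearMap.mul ℝ ℂ).flip
  refine ⟨compCLM ℝ (temperate_shift θ) hupper,
    bilinLeftCLM B hexp, bilinLeftCLM B hg1, derivCLM ℝ ℂ, ?_, ?_, ?_, ?_, ?_, ?_, ?_, ?_⟩
  · intro ξ s; rfl
  · intro ξ s; rfl
  · intro ξ s; rfl
  · intro ξ s; exact derivCLM_apply ℝ ξ s
  · intro ξ
    ext s
    simp only [SchwartzMap.sub_apply, SchwartzMap.smul_apply, SchwartzMap.zero_apply]
    show -(2 * Real.pi * Complex.I * s / θ) * ξ (s + θ) -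
        -(2 * Real.pi * Complex.I * ((s + θ : ℝ) : ℂ) / θ) * ξ (s + θ) =
        (2 * Real.pi * Complex.I : ℂ) • ξ (s + θ)
    rw [smul_eq_mul]
    have hθ' : (θ : ℂ) ≠ 0 := Complex.ofReal_ne_zero.mpr hθ
    push_cast
    field_simp
    ring
  · intro ξ
    ext s
    simp only [SchwartzMap.sub_apply, SchwartzMap.smul_apply, SchwartzMap.zero_apply]
    show -(2 * Real.pi * Complex.I * s / θ) * (Complex.exp (2 * Real.pi * Complex.I * s) * ξ s) -
        Complex.exp (2 * Real.pi * Complex.I * s) * (-(2 * Real.pi * Complex.I * s / θ) * ξ s) =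
        (0 : SchwartzMap ℝ ℂ) s
    simp; ring
  · intro ξ
    ext s
    simp only [SchwartzMap.sub_apply, SchwartzMap.smul_apply, SchwartzMap.zero_apply]
    show deriv (fun s => ξ (s + θ)) s - deriv (⇑ξ) (s + θ) = (0 : SchwartzMap ℝ ℂ) s
    rw [deriv_comp_add_const]
    simp
  · intro ξ
    ext s
    simp only [SchwartzMap.sub_apply, SchwartzMap.smul_apply, SchwartzMap.zero_apply]
    show deriv (fun s : ℝ => Complex.exp (2 * Real.pi * Complex.I * s) * ξ s) s -
        Complex.exp (2 * Real.pi * Complex.I * s) * deriv (⇑ξ) s =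
        (2 * Real.pi * Complex.I : ℂ) • (Complex.exp (2 * Real.pi * Complex.I * s) * ξ s)
    have he : HasDerivAt (fun t : ℝ => Complex.exp (2 * Real.pi * Complex.I * t))
        (2 * Real.pi * Complex.I * Complex.exp (2 * Real.pi * Complex.I * s)) s := by
      have := hasDerivAt_cexp_I_mul (2 * Real.pi * Complex.I) s
      convert this using 2 <;> push_cast <;> ring
    have hξ : HasDerivAt (⇑ξ) (deriv (⇑ξ) s) s :=
      (ξ.differentiableAt).hasDerivAt
    have := HasDerivAt.deriv (f := fun s : ℝ => Complex.exp (2 * Real.pi * Complex.I * s) * ξ s) (he.mul hξ)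
    rw [this, smul_eq_mul]
    ring
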